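/- Let C be a unitary n×n complex matrix, E ∈ ℂ, and let H : ℝ³ → Matrix (Fin n) (Fin n) ℂ satisfy the time-reversal symmetry TRS† of the AZ† classes: C · (H k)ᵀ · C⁻¹ = H(−k) for all k. Define the doubled Hamiltonian H̃(k) = Matrix.fromBlocks 0 (H(k) − E·1) ((H(k))ᴴ − conj(E)·1) 0 and C̃ = Matrix.fromBlocks 0 C C 0. Then C̃ · conj(H̃ k) · C̃⁻¹ = H̃(−k) for all k, and C̃ · conj(C̃) = Matrix.fromBlocks (C · conj C) 0 0 (C · conj C); in particular, if C · conj(C) = −1 (class AII†), then C̃ · conj(C̃) = −1, so the doubled Hermitian Hamiltonian acquires a time-reversal symmetry squaring to −1 (class DIII). -/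

import Mathlib

open Matrix

/-- Let `C` be unitary and let `H : ℝ³ → Matrix (Fin n) (Fin n) ℂ` satisfy
TRS†: `C · (H k)ᵀ · C⁻¹ = H(−k)`. With the doubled Hamiltonian
`H̃(k) = fromBlocks 0 (H k − E•1) ((H k)ᴴ − conj(E)•1) 0` and `C̃ = fromBlocks 0 C C 0`, one has
`C̃ · conj(H̃ k) · C̃⁻¹ = H̃(−k)` for all `k`, and
`C̃ · conj(C̃) = fromBlocks (C·conj C) 0 0 (C·conj C)`; in particular, if `C·conj C = −1`
(class AII†) then `C̃ · conj(C̃) = −1` (class DIII). -/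
theorem doubled_hamiltonian_TRS_dagger
    {n : ℕ} (C : Matrix (Fin n) (Fin n) ℂ)
    (hC1 : C * Cᴴ = 1) (hC2 : Cᴴ * C = 1) (E : ℂ)
    (H : (Fin 3 → ℝ) → Matrix (Fin n) (Fin n) ℂ)
    (hTRS : ∀ k, C * (H k)ᵀ * C⁻¹ = H (-k))
    (Htil : (Fin 3 → ℝ) → Matrix (Fin n ⊕ Fin n) (Fin n ⊕ Fin n) ℂ)
    (hHtil : ∀ k, Htil k =
      Matrix.fromBlocks 0 (H k - E • 1) ((H k)ᴴ - (starRingEnd ℂ E) • 1) 0)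
    (Ctil : Matrix (Fin n ⊕ Fin n) (Fin n ⊕ Fin n) ℂ)
    (hCtil : Ctil = Matrix.fromBlocks 0 C C 0) :
    (∀ k, Ctil * (Htil k).map (starRingEnd ℂ) * Ctil⁻¹ = Htil (-k)) ∧
    Ctil * Ctil.map (starRingEnd ℂ) =
      Matrix.fromBlocks (C * C.map (starRingEnd ℂ)) 0 0 (C * C.map (starRingEnd ℂ)) ∧
    (C * C.map (starRingEnd ℂ) = -1 → Ctil * Ctil.map (starRingEnd ℂ) = -1) := by
  have hCinv : C⁻¹ = Cᴴ := inv_eq_left_inv hC2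
  have hCtilinv : Ctil⁻¹ = Matrix.fromBlocks 0 Cᴴ Cᴴ 0 := by
    apply inv_eq_right_inv
    rw [hCtil]
    simp [Matrix.fromBlocks_multiply, hC1]
  refine ⟨?_, ?_, ?_⟩
  · intro k
    have h1 : C * (H k)ᵀ * Cᴴ = H (-k) := by rw [← hCinv]; exact hTRS k
    have h2 : C * ((H k)ᴴ)ᵀ * Cᴴ = (H (-k))ᴴ := by
      have := congrArg Matrix.conjTranspose h1
      simpa [Matrix.conjTranspose_mul, mul_assoc, Matrix.transpose_conjTranspose,
        Matrix.conjTranspose_transpose] using this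
    rw [hHtil, hHtil, hCtilinv, hCtil]
    have hmap : (Matrix.fromBlocks 0 (H k - E • 1) ((H k)ᴴ - (starRingEnd ℂ E) • 1)
        (0 : Matrix (Fin n) (Fin n) ℂ)).map (starRingEnd ℂ) =
        Matrix.fromBlocks 0 (((H k)ᴴ)ᵀ - (starRingEnd ℂ E) • 1) ((H k)ᵀ - E • 1) 0 := by
      ext (i|i) (j|j) <;>
        simp [Matrix.fromBlocks, Matrix.map_apply, Matrix.one_apply, Matrix.conjTranspose_apply,
          Matrix.transpose_apply, Matrix.sub_apply, Matrix.smul_apply, apply_ite (starRingEnd ℂ)]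
    rw [hmap]
    simp only [Matrix.fromBlocks_multiply, Matrix.mul_zero, Matrix.zero_mul, add_zero, zero_add]
    have e1 : C * ((H k)ᵀ - E • 1) * Cᴴ = H (-k) - E • 1 := by
      rw [mul_sub, sub_mul, h1]; simp [Matrix.smul_mul, Matrix.mul_smul, hC1]
    have e2 : C * (((H k)ᴴ)ᵀ - (starRingEnd ℂ E) • 1) * Cᴴ =
        (H (-k))ᴴ - (starRingEnd ℂ E) • 1 := by
      rw [mul_sub, sub_mul, h2]; simp [Matrix.smul_mul, Matrix.mul_smul, hC1]
    rw [e1, e2]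
  · rw [hCtil]
    have : (Matrix.fromBlocks 0 C C (0 : Matrix (Fin n) (Fin n) ℂ)).map (starRingEnd ℂ) =
        Matrix.fromBlocks 0 (C.map (starRingEnd ℂ)) (C.map (starRingEnd ℂ)) 0 := by
      ext (i|i) (j|j) <;> simp [Matrix.fromBlocks, Matrix.map_apply]
    rw [this]
    simp [Matrix.fromBlocks_multiply]
  · intro h
    rw [hCtil]
    have : (Matrix.fromBlocks 0 C C (0 : Matrix (Fin n) (Fin n) ℂ)).map (starRingEnd ℂ) =
        Matrix.fromBlocks 0 (C.map (starRingEnd ℂ)) (C.map (starRingEnd ℂ)) 0 := by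
      ext (i|i) (j|j) <;> simp [Matrix.fromBlocks, Matrix.map_apply]
    rw [this]
    simp only [Matrix.fromBlocks_multiply, h]
    ext (i|i) (j|j) <;>
      simp [Matrix.fromBlocks, Matrix.one_apply]
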